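/- Let (X, ‖·‖, ⪯) be a reflexive partially ordered Banach space in which all order intervals [a,→) = {x ∈ X : a ⪯ x} are convex and closed, let C be a nonempty convex closed bounded subset of X, and let T : C → C be a monotone mapping. If x₀ ∈ C satisfies x₀ ⪯ T(x₀), then the set C_∞ = {x ∈ C : T^n(x₀) ⪯ x for all n ≥ 0} is nonempty, and T maps C_∞ into itself. -/

import Mathlib

open Filter

/-- A Banach space is reflexive if the canonical embedding into its bidual is
surjective. -/
def IsReflexiveSpace (X : Type*) [NormedAddCommGroup X] [NormedSpace ℝ X] : Prop :=
  Function.Surjective (NormedSpace.inclusionInDoubleDual ℝ X)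

open NormedSpace Metric in
/-- In a normed space, a convex norm-closed set is weakly closed. -/
lemma aux_weak_closed {X : Type*} [NormedAddCommGroup X] [NormedSpace ℝ X]
    {s : Set X} (hconv : Convex ℝ s) (hcl : IsClosed s) :
    IsClosed (toWeakSpace ℝ X '' s) := by
  have h := hconv.toWeakSpace_closure (𝕜 := ℝ)
  rw [hcl.closure_eq] at h
  rw [← closure_eq_iff_isClosed, ← h]

open NormedSpace Metric in
/-- In a reflexive space, closed balls are weakly compact. -/
lemma aux_weak_compact_ball {X : Type*} [NormedAddCommGroup X] [NormedSpace ℝ X]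
    (hrefl : IsReflexiveSpace X) (r : ℝ) :
    IsCompact (toWeakSpace ℝ X '' closedBall (0 : X) r) := by
  have hsurj : Function.Surjective (inclusionInDoubleDualLi ℝ (E := X)) := hrefl
  let J : X ≃ₗᵢ[ℝ] StrongDual ℝ (StrongDual ℝ X) :=
    LinearIsometryEquiv.ofSurjective (inclusionInDoubleDualLi ℝ (E := X)) hsurj
  have hJapp : ∀ (x : X) (f : StrongDual ℝ X), J x f = f x := fun x f => rfl
  let g : WeakDual ℝ (StrongDual ℝ X) → WeakSpace ℝ X :=
    fun ψ => toWeakSpace ℝ X (J.symm (WeakDual.toStrongDual ψ))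
  have hg : Continuous g := by
    apply WeakBilin.continuous_of_continuous_eval
    intro f
    have : (fun ψ : WeakDual ℝ (StrongDual ℝ X) => (topDualPairing ℝ X).flip (g ψ) f)
        = fun ψ : WeakDual ℝ (StrongDual ℝ X) => ψ f := by
      funext ψ
      show f (J.symm (WeakDual.toStrongDual ψ)) = ψ f
      have := hJapp (J.symm (WeakDual.toStrongDual ψ)) f
      rw [J.apply_symm_apply] at this
      exact this.symm
    rw [this]
    exact WeakDual.eval_continuous f
  have hK : IsCompact (WeakDual.toStrongDual ⁻¹'
      closedBall (0 : StrongDual ℝ (StrongDual ℝ X)) r) := WeakDual.isCompact_closedBall (𝕜 := ℝ) (E := StrongDual ℝ X) 0 r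
  have himg : toWeakSpace ℝ X '' closedBall (0 : X) r
      = g '' (WeakDual.toStrongDual ⁻¹' closedBall (0 : StrongDual ℝ (StrongDual ℝ X)) r) := by
    ext y
    constructor
    · rintro ⟨x, hx, rfl⟩
      refine ⟨WeakDual.toStrongDual.symm (J x), ?_, ?_⟩
      · show J x ∈ closedBall (0 : StrongDual ℝ (StrongDual ℝ X)) r
        refine (mem_closedBall_zero_iff (E := StrongDual ℝ (StrongDual ℝ X))).mpr ?_
        simpa [mem_closedBall_zero_iff, J.norm_map] using mem_closedBall_zero_iff.mp hx
      · show toWeakSpace ℝ X (J.symm (J x)) = toWeakSpace ℝ X x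
        rw [J.symm_apply_apply]
    · rintro ⟨ψ, hψ, rfl⟩
      refine ⟨J.symm (WeakDual.toStrongDual ψ), ?_, rfl⟩
      have : (WeakDual.toStrongDual ψ : StrongDual ℝ (StrongDual ℝ X)) ∈ closedBall 0 r := hψ
      replace this := (mem_closedBall_zero_iff (E := StrongDual ℝ (StrongDual ℝ X))).mp this
      refine mem_closedBall_zero_iff.mpr ?_
      simpa [J.symm.norm_map] using this
  rw [himg]
  exact hK.image hg

/-- Let `X` be a reflexive partially ordered Banach space whose upward order intervals
`[a,→)` are convex and closed, `C` a nonempty convex closed bounded subset of `X`,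
and `T : C → C` a monotone mapping.  If `x₀ ∈ C` satisfies `x₀ ≤ T x₀`, then the set
`C_∞ = {x ∈ C : T^[n] x₀ ≤ x for all n}` is nonempty and `T`-invariant. -/
theorem Cinfty_nonempty_and_invariant
    {X : Type*} [NormedAddCommGroup X] [NormedSpace ℝ X] [CompleteSpace X]
    [PartialOrder X]
    (hrefl : IsReflexiveSpace X)
    (hIccUp : ∀ a : X, Convex ℝ {x : X | a ≤ x} ∧ IsClosed {x : X | a ≤ x})
    (C : Set X) (hCne : C.Nonempty) (hCconv : Convex ℝ C) (hCcl : IsClosed C)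
    (hCbd : Bornology.IsBounded C)
    (T : X → X) (hTC : Set.MapsTo T C C)
    (hTmono : ∀ x ∈ C, ∀ y ∈ C, x ≤ y → T x ≤ T y)
    (x₀ : X) (hx₀ : x₀ ∈ C) (hx₀T : x₀ ≤ T x₀) :
    ({x ∈ C | ∀ n : ℕ, T^[n] x₀ ≤ x}).Nonempty ∧
      Set.MapsTo T {x ∈ C | ∀ n : ℕ, T^[n] x₀ ≤ x} {x ∈ C | ∀ n : ℕ, T^[n] x₀ ≤ x} := by
  -- basic facts about the iterates
  have hmem : ∀ n : ℕ, T^[n] x₀ ∈ C := by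
    intro n
    induction n with
    | zero => simpa using hx₀
    | succ n ih => rw [Function.iterate_succ_apply']; exact hTC ih
  have hstep : ∀ n : ℕ, T^[n] x₀ ≤ T^[n + 1] x₀ := by
    intro n
    induction n with
    | zero => simpa using hx₀T
    | succ n ih =>
      rw [Function.iterate_succ_apply', Function.iterate_succ_apply' T (n + 1)]
      exact hTmono _ (hmem n) _ (hmem (n + 1)) ih
  -- the decreasing sets
  set D : ℕ → Set X := fun n => C ∩ {x | T^[n] x₀ ≤ x} with hD
  have hDsub : ∀ n : ℕ, D (n + 1) ⊆ D n := by
    intro n x hx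
    exact ⟨hx.1, le_trans (hstep n) hx.2⟩
  have hDconv : ∀ n, Convex ℝ (D n) := fun n => hCconv.inter (hIccUp _).1
  have hDcl : ∀ n, IsClosed (D n) := fun n => hCcl.inter (hIccUp _).2
  have hDne : ∀ n, T^[n] x₀ ∈ D n := fun n => ⟨hmem n, le_refl _⟩
  obtain ⟨r, hr⟩ := (Metric.isBounded_iff_subset_closedBall (0 : X)).mp hCbd
  -- pass to the weak topology
  set t : ℕ → Set (WeakSpace ℝ X) := fun n => toWeakSpace ℝ X '' D n with ht
  have htcl : ∀ n, IsClosed (t n) := fun n => aux_weak_closed (hDconv n) (hDcl n)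
  have htcpt : ∀ n, IsCompact (t n) := by
    intro n
    refine (aux_weak_compact_ball hrefl r).of_isClosed_subset (htcl n) ?_
    exact Set.image_mono fun x hx => hr hx.1
  have key : (⋂ n, t n).Nonempty := by
    apply IsCompact.nonempty_iInter_of_sequence_nonempty_isCompact_isClosed t
      (fun n => Set.image_mono (hDsub n))
      (fun n => ⟨_, Set.mem_image_of_mem _ (hDne n)⟩) (htcpt 0) htcl
  obtain ⟨y, hy⟩ := key
  set x : X := (toWeakSpace ℝ X).symm y with hxdef
  have hxD : ∀ n, x ∈ D n := by
    intro n
    obtain ⟨z, hz, hzy⟩ := Set.mem_iInter.mp hy n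
    have : z = x := by rw [hxdef, ← hzy, LinearEquiv.symm_apply_apply]
    rwa [this] at hz
  constructor
  · exact ⟨x, (hxD 0).1, fun n => (hxD n).2⟩
  · rintro z ⟨hzC, hz⟩
    refine ⟨hTC hzC, fun n => ?_⟩
    cases n with
    | zero =>
      simpa using le_trans hx₀T (hTmono x₀ hx₀ z hzC (by simpa using hz 0))
    | succ n =>
      rw [Function.iterate_succ_apply']
      exact hTmono _ (hmem n) _ hzC (hz n)
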